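/- Let G = ⊎(G', P) be obtained by attaching a path P between two distinct vertices of G'. If an edge set X of G is switching-equivalent to ∅ in G, then X ∩ E(G') is switching-equivalent to ∅ in G'; and if X is switching-equivalent to E(G) in G, then X ∩ E(G') is switching-equivalent to E(G') in G'. -/
import Mathlib


open SimpleGraph

variable {V : Type*}

/-- The edge cut `∇_G(U)`: edges of `G` with exactly one endpoint in `U`. -/
def edgeCut (G : SimpleGraph V) (U : Set V) : Set (Sym2 V) :=
  {e | e ∈ G.edgeSet ∧ ∃ x y, e = s(x, y) ∧ x ∈ U ∧ y ∉ U}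

/-- Switching-equivalence of edge sets in `G`: `X = Y ⊕ ∇_G(V₀)` for some `V₀`. -/
def SwEquiv (G : SimpleGraph V) (X Y : Set (Sym2 V)) : Prop :=
  ∃ U : Set V, X = symmDiff Y (edgeCut G U)

/-- A feasible edge set: two perfect matchings meeting `X` with different parities. -/
def Feasible (G : SimpleGraph V) (X : Set (Sym2 V)) : Prop :=
  ∃ M₁ M₂ : G.Subgraph, M₁.IsPerfectMatching ∧ M₂.IsPerfectMatching ∧
    (M₁.edgeSet ∩ X).ncard % 2 ≠ (M₂.edgeSet ∩ X).ncard % 2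

/-- A matching-covered graph: connected and every edge lies in a perfect matching. -/
def MatchingCovered (G : SimpleGraph V) : Prop :=
  G.Connected ∧ ∀ e ∈ G.edgeSet, ∃ M : G.Subgraph, M.IsPerfectMatching ∧ e ∈ M.edgeSet

/-- `G = ⊎(G', P)`: `G` is obtained from `G'` by attaching the path `p`
(a single ear) between two distinct vertices `u, v` of `G'`, the internal
vertices of `p` being disjoint from `G'`. -/
structure IsEarAttachment (G' G : SimpleGraph V) {u v : V} (p : G.Walk u v) : Prop where
  ne : u ≠ v
  isPath : p.IsPath
  uMem : u ∈ G'.support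
  vMem : v ∈ G'.support
  internal : ∀ w ∈ p.support, w ≠ u → w ≠ v → w ∉ G'.support
  edgeUnion : G.edgeSet = G'.edgeSet ∪ {e | e ∈ p.edges}
  edgeDisj : Disjoint G'.edgeSet {e | e ∈ p.edges}

/-- in `G = ⊎(G', P)`, `X ~ ∅` in `G` implies
`X ∩ E(G') ~ ∅` in `G'`, and `X ~ E(G)` in `G` implies `X ∩ E(G') ~ E(G')` in `G'`. -/
theorem stmt13 {G' G : SimpleGraph V} {u v : V} {p : G.Walk u v}
    (hear : IsEarAttachment G' G p)
    {X : Set (Sym2 V)} (hX : X ⊆ G.edgeSet) :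
    (SwEquiv G X ∅ → SwEquiv G' (X ∩ G'.edgeSet) ∅) ∧
    (SwEquiv G X G.edgeSet → SwEquiv G' (X ∩ G'.edgeSet) G'.edgeSet) := by
  have hsub : G'.edgeSet ⊆ G.edgeSet := by
    rw [hear.edgeUnion]; exact Set.subset_union_left
  have hcut : ∀ U : Set V, edgeCut G U ∩ G'.edgeSet = edgeCut G' U := by
    intro U
    ext e
    constructor
    · rintro ⟨⟨-, hxy⟩, he'⟩
      exact ⟨he', hxy⟩
    · rintro ⟨he', hxy⟩
      exact ⟨⟨hsub he', hxy⟩, he'⟩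
  constructor
  · rintro ⟨U, hU⟩
    refine ⟨U, ?_⟩
    rw [hU]
    have := hcut U
    ext e
    simp only [Set.symmDiff_def, Set.mem_inter_iff, Set.mem_union, Set.mem_diff,
      Set.mem_empty_iff_false] at *
    constructor
    · rintro ⟨h1, h2⟩
      right
      refine ⟨?_, fun h => h.elim⟩
      rw [← this]; tauto
    · rintro (⟨h, -⟩ | ⟨h, -⟩)
      · exact h.elim
      · rw [← this] at h
        obtain ⟨h1, h2⟩ := h
        tauto
  · rintro ⟨U, hU⟩
    refine ⟨U, ?_⟩
    have : (symmDiff G.edgeSet (edgeCut G U)) ∩ G'.edgeSet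
        = symmDiff (G.edgeSet ∩ G'.edgeSet) (edgeCut G U ∩ G'.edgeSet) := by
      ext e
      simp [Set.symmDiff_def]
      tauto
    rw [hU, this, hcut, Set.inter_eq_right.mpr hsub]
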